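/- For the Gaussian model x̄ ~ N(θ, σ²/n) with point null θ = 0 and prior density π under the alternative that is continuous with π(0) = c_π ∈ (0, ∞) and bounded, the Bayes factor BF₀₁(x̄) = f(x̄ | 0) / ∫ f(x̄ | θ) π(θ) dθ satisfies: for any sequence x̄_n with |x̄_n| ≤ A√((log n)/n), BF₀₁(x̄_n) · (σ√(2π) c_π / √n) · exp(t_n²/2) → 1, where t_n = √n x̄_n/σ. -/

import Mathlib

open Filter

/-- Sampling density of the mean `x̄ ~ N(θ, σ²/n)`. -/
noncomputable def meanDensity (σ : ℝ) (n : ℕ) (xbar θ : ℝ) : ℝ :=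
  Real.sqrt n / (σ * Real.sqrt (2 * Real.pi)) *
    Real.exp (-(n : ℝ) * (xbar - θ) ^ 2 / (2 * σ ^ 2))

/-- Bayes factor in favour of `H₀ : θ = 0` against the mixture alternative with
prior density `p`. -/
noncomputable def BF01 (σ : ℝ) (p : ℝ → ℝ) (n : ℕ) (xbar : ℝ) : ℝ :=
  meanDensity σ n xbar 0 / ∫ θ : ℝ, meanDensity σ n xbar θ * p θ

/-- Uniform leading-order Bayes factor expansion on the moderate deviation band:
for `|x̄_n| ≤ A√((log n)/n)` and `t_n = √n x̄_n/σ`,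
`BF₀₁(x̄_n) · (σ√(2π) c_π/√n) · e^{t_n²/2} → 1`. -/
theorem bf_expansion_md_band (σ cpi A : ℝ) (p : ℝ → ℝ)
    (hσ : 0 < σ) (hcpi : 0 < cpi) (hA : 0 < A)
    (hcont : Continuous p) (h0 : p 0 = cpi)
    (hbdd : ∃ B : ℝ, ∀ θ : ℝ, |p θ| ≤ B)
    (xbar : ℕ → ℝ)
    (hx : ∀ n : ℕ, |xbar n| ≤ A * Real.sqrt (Real.log n / n)) :
    Tendsto (fun n : ℕ =>
        BF01 σ p n (xbar n) * (σ * Real.sqrt (2 * Real.pi) * cpi / Real.sqrt n) *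
          Real.exp ((Real.sqrt n * xbar n / σ) ^ 2 / 2))
      atTop (nhds 1) := by
  obtain ⟨B, hB⟩ := hbdd
  have h2π : (0:ℝ) < 2 * Real.pi := by positivity
  have hs2π : (0:ℝ) < Real.sqrt (2 * Real.pi) := Real.sqrt_pos.mpr h2π
  set φ : ℝ → ℝ := fun u => (Real.sqrt (2 * Real.pi))⁻¹ * Real.exp (-(1/2) * u ^ 2) with hφ
  have hφpos : ∀ u, 0 ≤ φ u := fun u => by positivity
  -- √ tends to atTop
  have hsqrt : Tendsto Real.sqrt atTop atTop :=
    tendsto_atTop_atTop_of_monotone (fun a b h => Real.sqrt_le_sqrt h)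
      (fun b => ⟨b ^ 2, by rw [Real.sqrt_sq_eq_abs]; exact le_abs_self b⟩)
  have hsn : Tendsto (fun n : ℕ => Real.sqrt n) atTop atTop :=
    hsqrt.comp tendsto_natCast_atTop_atTop
  -- xbar → 0
  have hlogn : Tendsto (fun n : ℕ => Real.log n / n) atTop (nhds 0) :=
    (Real.isLittleO_log_id_atTop.tendsto_div_nhds_zero).comp tendsto_natCast_atTop_atTop
  have hxb : Tendsto xbar atTop (nhds 0) := by
    have hbound : Tendsto (fun n : ℕ => A * Real.sqrt (Real.log n / n)) atTop (nhds 0) := by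
      have : Tendsto (fun n : ℕ => Real.sqrt (Real.log n / n)) atTop (nhds 0) := by
        have h := (Real.continuous_sqrt.tendsto 0).comp hlogn
        simpa only [Function.comp_def, Real.sqrt_zero] using h
      simpa using this.const_mul A
    have h1 : Tendsto (fun n : ℕ => |xbar n|) atTop (nhds 0) :=
      squeeze_zero (fun n => abs_nonneg _) hx hbound
    exact (tendsto_zero_iff_abs_tendsto_zero xbar).mpr h1
  -- the perturbed argument tends to 0 for each fixed u
  have harg : ∀ u : ℝ, Tendsto (fun n : ℕ => xbar n + σ * u / Real.sqrt n) atTop (nhds 0) := by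
    intro u
    have h2 : Tendsto (fun n : ℕ => σ * u / Real.sqrt n) atTop (nhds 0) := by
      simpa [div_eq_mul_inv] using (hsn.inv_tendsto_atTop).const_mul (σ * u)
    simpa using hxb.add h2
  -- change of variables: for n ≥ 1
  have key : ∀ n : ℕ, 1 ≤ n →
      (∫ θ : ℝ, meanDensity σ n (xbar n) θ * p θ)
        = ∫ u : ℝ, φ u * p (xbar n + σ * u / Real.sqrt n) := by
    intro n hn
    have hnr : (0:ℝ) < n := by exact_mod_cast hn
    have hsnpos : 0 < Real.sqrt n := Real.sqrt_pos.mpr hnr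
    have hsq : (Real.sqrt n) ^ 2 = (n : ℝ) := Real.sq_sqrt hnr.le
    set c : ℝ := σ / Real.sqrt n with hc
    have hcpos : 0 < c := div_pos hσ hsnpos
    have h1 : (∫ x : ℝ, (fun θ => meanDensity σ n (xbar n) θ * p θ) (c * x + xbar n))
        = |c⁻¹| • ∫ θ : ℝ, meanDensity σ n (xbar n) θ * p θ := by
      have := MeasureTheory.Measure.integral_comp_mul_left
        (fun x => meanDensity σ n (xbar n) (x + xbar n) * p (x + xbar n)) c
      rw [this, MeasureTheory.integral_add_right_eq_self
        (fun θ => meanDensity σ n (xbar n) θ * p θ) (xbar n)]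
    have h2 : (∫ θ : ℝ, meanDensity σ n (xbar n) θ * p θ)
        = c • ∫ x : ℝ, meanDensity σ n (xbar n) (c * x + xbar n) * p (c * x + xbar n) := by
      rw [h1, abs_of_pos (inv_pos.mpr hcpos), smul_smul, mul_inv_cancel₀ hcpos.ne', one_smul]
    rw [h2, ← MeasureTheory.integral_smul]
    congr 1
    funext u
    have hexp : -(n : ℝ) * (xbar n - (c * u + xbar n)) ^ 2 / (2 * σ ^ 2)
        = -(1/2) * u ^ 2 := by
      have : (xbar n - (c * u + xbar n)) ^ 2 = c ^ 2 * u ^ 2 := by ring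
      rw [this, hc, div_pow, hsq]
      field_simp
    simp only [meanDensity, hexp, smul_eq_mul, hφ]
    have harg2 : c * u + xbar n = xbar n + σ * u / Real.sqrt n := by
      rw [hc]; ring
    rw [harg2, hc]
    field_simp
  -- dominated convergence
  have hI : Tendsto (fun n : ℕ => ∫ u : ℝ, φ u * p (xbar n + σ * u / Real.sqrt n))
      atTop (nhds cpi) := by
    have hint : MeasureTheory.Integrable (fun u : ℝ => B * φ u) := by
      have : MeasureTheory.Integrable (fun u : ℝ => Real.exp (-(1/2) * u ^ 2)) :=
        integrable_exp_neg_mul_sq (by norm_num)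
      simpa [hφ, mul_assoc] using (this.const_mul ((Real.sqrt (2 * Real.pi))⁻¹)).const_mul B
    have hlim : Tendsto (fun n : ℕ => ∫ u : ℝ, φ u * p (xbar n + σ * u / Real.sqrt n))
        atTop (nhds (∫ u : ℝ, φ u * cpi)) := by
      apply MeasureTheory.tendsto_integral_of_dominated_convergence (fun u => B * φ u)
      · intro n
        exact ((continuous_const.mul (Real.continuous_exp.comp (by continuity))).mul
          (hcont.comp (by continuity))).aestronglyMeasurable
      · exact hint
      · intro n
        filter_upwards with u
        rw [norm_mul, Real.norm_eq_abs, Real.norm_eq_abs, abs_of_nonneg (hφpos u), mul_comm]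
        exact mul_le_mul_of_nonneg_right (hB _) (hφpos u)
      · filter_upwards with u
        exact (tendsto_const_nhds.mul (by simpa [h0, Function.comp_def] using (hcont.tendsto 0).comp (harg u)))
    have hval : (∫ u : ℝ, φ u * cpi) = cpi := by
      rw [MeasureTheory.integral_mul_const]
      have : (∫ u : ℝ, φ u) = 1 := by
        rw [hφ]
        rw [MeasureTheory.integral_const_mul]
        have hg : (∫ u : ℝ, Real.exp (-(1/2) * u ^ 2)) = Real.sqrt (Real.pi / (1/2)) :=
          integral_gaussian (1/2)
        rw [hg]
        rw [show Real.pi / (1/2) = 2 * Real.pi by ring]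
        exact inv_mul_cancel₀ hs2π.ne'
      rw [this, one_mul]
    rwa [hval] at hlim
  -- the denominator integral tends to cpi
  have hIc : Tendsto (fun n : ℕ => ∫ θ : ℝ, meanDensity σ n (xbar n) θ * p θ)
      atTop (nhds cpi) := by
    apply hI.congr'
    filter_upwards [eventually_ge_atTop 1] with n hn
    exact (key n hn).symm
  -- final assembly
  have hfin : Tendsto (fun n : ℕ =>
      cpi / ∫ θ : ℝ, meanDensity σ n (xbar n) θ * p θ) atTop (nhds 1) := by
    have := ((tendsto_const_nhds : Filter.Tendsto (fun _ : ℕ => cpi) atTop (nhds cpi)).div hIc hcpi.ne')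
    simpa [div_self hcpi.ne', Pi.div_def] using this
  apply hfin.congr'
  filter_upwards [eventually_ge_atTop 1] with n hn
  have hnr : (0:ℝ) < n := by exact_mod_cast hn
  have hsnpos : 0 < Real.sqrt n := Real.sqrt_pos.mpr hnr
  have hsq : (Real.sqrt n) ^ 2 = (n : ℝ) := Real.sq_sqrt hnr.le
  set I := ∫ θ : ℝ, meanDensity σ n (xbar n) θ * p θ with hI'
  have hexp : Real.exp (-(n : ℝ) * (xbar n - 0) ^ 2 / (2 * σ ^ 2)) *
      Real.exp ((Real.sqrt n * xbar n / σ) ^ 2 / 2) = 1 := by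
    rw [← Real.exp_add, ← Real.exp_zero]
    congr 1
    have : (Real.sqrt n * xbar n / σ) ^ 2 = (n : ℝ) * (xbar n) ^ 2 / σ ^ 2 := by
      rw [div_pow, mul_pow, hsq]
    rw [this]
    field_simp
    ring
  show cpi / I = BF01 σ p n (xbar n) * (σ * Real.sqrt (2 * Real.pi) * cpi / Real.sqrt n) *
      Real.exp ((Real.sqrt n * xbar n / σ) ^ 2 / 2)
  rw [BF01, meanDensity, ← hI']
  rw [div_mul_eq_mul_div, div_mul_eq_mul_div]
  congr 1
  symm
  calc Real.sqrt n / (σ * Real.sqrt (2 * Real.pi)) *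
        Real.exp (-(n : ℝ) * (xbar n - 0) ^ 2 / (2 * σ ^ 2)) *
        (σ * Real.sqrt (2 * Real.pi) * cpi / Real.sqrt n) *
        Real.exp ((Real.sqrt n * xbar n / σ) ^ 2 / 2)
      = cpi * (Real.exp (-(n : ℝ) * (xbar n - 0) ^ 2 / (2 * σ ^ 2)) *
          Real.exp ((Real.sqrt n * xbar n / σ) ^ 2 / 2)) *
        (Real.sqrt n / Real.sqrt n) *
        ((σ * Real.sqrt (2 * Real.pi)) / (σ * Real.sqrt (2 * Real.pi))) := by ring
    _ = cpi := by
        rw [hexp, div_self hsnpos.ne', div_self (mul_ne_zero hσ.ne' hs2π.ne')]; ring
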